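/- For all integers n ≥ 0, a ≥ 1, and N ≥ 0, the following inequality holds: Σ k₀!·ℓ₁!·k₁!·⋯·ℓ_n!·k_n!·m! · Π_{i=0}^{n} (S_i + (n+1−i)·a)^a ≤ (36·a^{a−1})^{n+1} · (N + (n+1)·a)!, where the sum runs over all nonnegative integers k₀, …, k_n, ℓ₁, …, ℓ_n, m with k₀ + ⋯ + k_n + ℓ₁ + ⋯ + ℓ_n + m = N, and where S_i denotes the tail sum S_i := k_i + ℓ_{i+1} + k_{i+1} + ⋯ + ℓ_n + k_n + m (so S_n = k_n + m and S₀ = N). -/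

import Mathlib

open Finset Nat


lemma fact_mul_fact_le (p q : ℕ) : (p + 1)! * (q + 1)! ≤ (p + q + 1)! := by
  induction p with
  | zero => simp [Nat.factorial]
  | succ p ih =>
      calc (p + 1 + 1)! * (q + 1)! = (p + 2) * ((p + 1)! * (q + 1)!) := by
            rw [Nat.factorial_succ]; ring
        _ ≤ (p + 2) * (p + q + 1)! := Nat.mul_le_mul_left _ ih
        _ ≤ (p + q + 2) * (p + q + 1)! := Nat.mul_le_mul_right _ (by omega)
        _ = (p + 1 + q + 1)! := by rw [← Nat.factorial_succ]; ring_nf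

lemma lemA (K : ℕ) : ∑ p ∈ Finset.HasAntidiagonal.antidiagonal K, p.1 ! * p.2 ! ≤ 3 * K ! := by
  rw [Nat.sum_antidiagonal_eq_sum_range_succ_mk]
  match K with
  | 0 => simp
  | K + 1 =>
      rw [Finset.sum_range_succ, Finset.sum_range_succ']
      have h1 : ∑ i ∈ range K, (i + 1)! * (K + 1 - (i + 1))! ≤ K * K ! := by
        calc ∑ i ∈ range K, (i + 1)! * (K + 1 - (i + 1))! ≤ ∑ _i ∈ range K, K ! := by
              refine Finset.sum_le_sum fun i hi => ?_
              have hiK : i < K := Finset.mem_range.mp hi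
              have : K + 1 - (i + 1) = (K - i - 1) + 1 := by omega
              rw [this]
              have := fact_mul_fact_le i (K - i - 1)
              have he : i + (K - i - 1) + 1 = K := by omega
              rwa [he] at this
          _ = K * K ! := by simp [mul_comm]
      have h0 : (0:ℕ)! * (K + 1 - 0)! = (K+1)! := by simp
      have hl : (K+1)! * (K+1-(K+1))! = (K+1)! := by simp
      rw [h0, hl]
      calc (∑ i ∈ range K, (i + 1)! * (K + 1 - (i + 1))! + (K+1)!) + (K+1)!
          ≤ (K * K ! + (K+1)!) + (K+1)! := by omega
        _ ≤ 3 * (K+1)! := by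
            have : K * K ! ≤ (K + 1) * K ! := Nat.mul_le_mul_right _ (by omega)
            rw [← Nat.factorial_succ] at this
            omega

lemma lemB (b N : ℕ) (hb : 1 ≤ b) :
    ∑ p ∈ Finset.HasAntidiagonal.antidiagonal N, p.1 ! * (p.2 + b)! ≤ 2 * (N + b)! := by
  rw [Nat.sum_antidiagonal_eq_sum_range_succ_mk]
  rw [Finset.sum_range_succ']
  have h0 : (0:ℕ)! * (N - 0 + b)! = (N + b)! := by simp
  rw [h0]
  have h1 : ∑ i ∈ range N, (i + 1)! * (N - (i + 1) + b)! ≤ N * (N + b - 1)! := by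
    calc ∑ i ∈ range N, (i + 1)! * (N - (i + 1) + b)! ≤ ∑ _i ∈ range N, (N + b - 1)! := by
          refine Finset.sum_le_sum fun i hi => ?_
          have hiN : i < N := Finset.mem_range.mp hi
          have : N - (i + 1) + b = (N - i - 1 + b - 1) + 1 := by omega
          rw [this]
          have := fact_mul_fact_le i (N - i - 1 + b - 1)
          have he : i + (N - i - 1 + b - 1) + 1 = N + b - 1 := by omega
          rwa [he] at this
      _ = N * (N + b - 1)! := by simp [mul_comm]
  have h2 : N * (N + b - 1)! ≤ (N + b)! := by
    have e : (N + b)! = (N + b) * (N + b - 1)! := by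
      obtain ⟨c, hc⟩ : ∃ c, N + b = c + 1 := ⟨N + b - 1, by omega⟩
      rw [hc, Nat.factorial_succ, Nat.add_sub_cancel]
    rw [e]
    exact Nat.mul_le_mul_right _ (by omega)
  simp only at h1 ⊢
  omega

lemma lemP (a N : ℕ) (ha : 1 ≤ a) : N ! * (N + a) ^ a ≤ a ^ (a - 1) * (N + a)! := by
  have asc : ∀ k, (N + 1).ascFactorial k = ∏ j ∈ range k, (N + 1 + j) := by
    intro k
    induction k with
    | zero => simp
    | succ k ih => rw [Nat.ascFactorial_succ, Finset.prod_range_succ, ih]; ring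
  have hQ : a ! * (N + a) ^ a ≤ a ^ a * (N + 1).ascFactorial a := by
    have : a ! * (N + a) ^ a = ∏ j ∈ range a, ((j + 1) * (N + a)) := by
      rw [Finset.prod_mul_distrib, Finset.prod_range_add_one_eq_factorial, Finset.prod_const,
        Finset.card_range]
    rw [this, asc]
    have : a ^ a * ∏ j ∈ range a, (N + 1 + j) = ∏ j ∈ range a, (a * (N + 1 + j)) := by
      rw [Finset.prod_mul_distrib, Finset.prod_const, Finset.card_range]
    rw [this]
    refine Finset.prod_le_prod' fun j hj => ?_
    have hj' : j + 1 ≤ a := Finset.mem_range.mp hj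
    nlinarith
  have key : a * (N ! * (N + a) ^ a) ≤ a * (a ^ (a - 1) * (N + a)!) := by
    calc a * (N ! * (N + a) ^ a) ≤ a ! * (N ! * (N + a) ^ a) :=
          Nat.mul_le_mul_right _ (Nat.self_le_factorial a)
      _ = N ! * (a ! * (N + a) ^ a) := by ring
      _ ≤ N ! * (a ^ a * (N + 1).ascFactorial a) := Nat.mul_le_mul_left _ hQ
      _ = a ^ a * (N ! * (N + 1).ascFactorial a) := by ring
      _ = a ^ a * (N + a)! := by rw [Nat.factorial_mul_ascFactorial]
      _ = a * (a ^ (a - 1) * (N + a)!) := by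
          rw [← mul_assoc, ← pow_succ']
          congr 2
          omega
  exact Nat.le_of_mul_le_mul_left key (by omega)


lemma sum_AT_cons {M : Type*} [AddCommMonoid M] (k N : ℕ) (g : (Fin (k + 1) → ℕ) → M) :
    ∑ f ∈ Finset.Nat.antidiagonalTuple (k + 1) N, g f =
      ∑ p ∈ Finset.HasAntidiagonal.antidiagonal N, ∑ f ∈ Finset.Nat.antidiagonalTuple k p.2,
        g (Fin.cons p.1 f) := by
  have hs := Finset.sum_sigma' (Finset.HasAntidiagonal.antidiagonal N)
    (fun p => Finset.Nat.antidiagonalTuple k p.2)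
    (fun p (f : Fin k → ℕ) => g (Fin.cons (α := fun _ => ℕ) p.1 f))
  rw [hs]
  refine Finset.sum_nbij'
    (i := fun f : Fin (k + 1) → ℕ =>
      (⟨(f 0, ∑ i, Fin.tail f i), Fin.tail f⟩ : (_ : ℕ × ℕ) × (Fin k → ℕ)))
    (j := fun x : (_ : ℕ × ℕ) × (Fin k → ℕ) => Fin.cons x.1.1 x.2) ?_ ?_ ?_ ?_ ?_
  · intro f hf
    rw [Finset.Nat.mem_antidiagonalTuple] at hf
    simp only [Finset.mem_sigma, Finset.HasAntidiagonal.mem_antidiagonal, Finset.Nat.mem_antidiagonalTuple]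
    refine ⟨?_, trivial⟩
    rw [← hf, Fin.sum_univ_succ]
    rfl
  · intro x hx
    simp only [Finset.mem_sigma, Finset.HasAntidiagonal.mem_antidiagonal,
      Finset.Nat.mem_antidiagonalTuple] at hx
    rw [Finset.Nat.mem_antidiagonalTuple, Fin.sum_cons, hx.2, hx.1]
  · intro f _
    exact Fin.cons_self_tail f
  · intro x hx
    simp only [Finset.mem_sigma, Finset.HasAntidiagonal.mem_antidiagonal,
      Finset.Nat.mem_antidiagonalTuple] at hx
    have ht : Fin.tail (Fin.cons (α := fun _ => ℕ) x.1.1 x.2) = x.2 := Fin.tail_cons _ _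
    refine Sigma.ext ?_ ?_
    · simp [ht, hx.2, Fin.cons_zero]
    · simp [ht]
  · intro f _
    rw [Fin.cons_self_tail]

lemma tail_filter_sum (m c : ℕ) (f : Fin (m + 1) → ℕ) :
    ∑ j ∈ Finset.univ.filter (fun j : Fin (m + 1) => c + 1 ≤ (j : ℕ)), f j =
      ∑ j ∈ Finset.univ.filter (fun j : Fin m => c ≤ (j : ℕ)), Fin.tail f j := by
  rw [Finset.sum_filter, Finset.sum_filter, Fin.sum_univ_succ]
  simp only [Fin.val_zero, Fin.val_succ]
  simp only [show ¬ (c + 1 ≤ 0) by omega, ↓reduceIte]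
  rw [zero_add]
  refine Finset.sum_congr rfl fun j _ => ?_
  simp only [Nat.add_le_add_iff_right]
  rfl

lemma lemBB (b N : ℕ) (hb : 1 ≤ b) :
    ∑ p ∈ Finset.HasAntidiagonal.antidiagonal N, ∑ q ∈ Finset.HasAntidiagonal.antidiagonal p.2,
      p.1 ! * (q.1 ! * (q.2 + b)!) ≤ 4 * (N + b)! := by
  calc ∑ p ∈ Finset.HasAntidiagonal.antidiagonal N, ∑ q ∈ Finset.HasAntidiagonal.antidiagonal p.2,
        p.1 ! * (q.1 ! * (q.2 + b)!)
      ≤ ∑ p ∈ Finset.HasAntidiagonal.antidiagonal N, p.1 ! * (2 * (p.2 + b)!) := by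
        refine Finset.sum_le_sum fun p _ => ?_
        rw [← Finset.mul_sum]
        exact Nat.mul_le_mul_left _ (lemB b p.2 hb)
    _ = 2 * ∑ p ∈ Finset.HasAntidiagonal.antidiagonal N, p.1 ! * (p.2 + b)! := by
        rw [Finset.mul_sum]
        exact Finset.sum_congr rfl fun p _ => by ring
    _ ≤ 2 * (2 * (N + b)!) := Nat.mul_le_mul_left _ (lemB b N hb)
    _ = 4 * (N + b)! := by ring


/-- combinatorial inequality for the inverse of a singularly perturbed
linear operator.  A tuple `f : Fin (2n+2) → ℕ` encodes `(k₀, ℓ₁, k₁, ℓ₂, …, ℓ_n, k_n, m)`,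
so `k_i = f (2i)`, `ℓ_i = f (2i−1)`, `m = f (2n+1)`, and the tail sum
`S_i = k_i + ℓ_{i+1} + ⋯ + ℓ_n + k_n + m` is the sum of the entries with index `≥ 2i`. -/
theorem stmt15 (n a N : ℕ) (ha : 1 ≤ a) :
    ∑ f ∈ Finset.Nat.antidiagonalTuple (2 * n + 2) N,
        (∏ i, (f i).factorial) *
          ∏ i ∈ Finset.range (n + 1),
            ((∑ j ∈ Finset.univ.filter (fun j : Fin (2 * n + 2) => 2 * i ≤ (j : ℕ)), f j) +
                (n + 1 - i) * a) ^ a ≤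
      (36 * a ^ (a - 1)) ^ (n + 1) * (N + (n + 1) * a).factorial := by
  induction n generalizing N with
  | zero =>
      rw [show (2 * 0 + 2) = 1 + 1 by norm_num]
      rw [sum_AT_cons 1 N]
      have hstep : ∀ p ∈ Finset.HasAntidiagonal.antidiagonal N,
          (∑ f ∈ Finset.Nat.antidiagonalTuple 1 p.2,
            (∏ i, ((Fin.cons p.1 f : Fin (1+1) → ℕ) i).factorial) *
              ∏ i ∈ Finset.range (0 + 1),
                ((∑ j ∈ Finset.univ.filter (fun j : Fin (1 + 1) => 2 * i ≤ (j : ℕ)),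
                  (Fin.cons p.1 f : Fin (1+1) → ℕ) j) + (0 + 1 - i) * a) ^ a)
            = p.1 ! * p.2 ! * (N + a) ^ a := by
        intro p hp
        rw [Finset.Nat.antidiagonalTuple_one, Finset.sum_singleton]
        rw [Finset.HasAntidiagonal.mem_antidiagonal] at hp
        rw [Finset.prod_range_one]
        have hfilt : Finset.univ.filter (fun j : Fin (1 + 1) => 2 * 0 ≤ (j : ℕ)) = Finset.univ := by
          simp
        rw [hfilt]
        have hsum : ∑ j, (Fin.cons p.1 ![p.2] : Fin (1+1) → ℕ) j = N := by
          rw [Fin.sum_cons]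
          simp [hp.symm]
        rw [hsum]
        have hprod : (∏ i, ((Fin.cons p.1 ![p.2] : Fin (1+1) → ℕ) i).factorial)
            = p.1 ! * p.2 ! := by
          simp [Fin.prod_univ_succ]
        rw [hprod]
        norm_num
      rw [Finset.sum_congr rfl hstep]
      have h1 : ∑ p ∈ Finset.HasAntidiagonal.antidiagonal N, p.1 ! * p.2 ! * (N + a) ^ a
          ≤ 3 * N ! * (N + a) ^ a := by
        rw [← Finset.sum_mul]
        exact Nat.mul_le_mul_right _ (lemA N)
      have h2 : 3 * N ! * (N + a) ^ a ≤ 3 * (a ^ (a - 1) * (N + a)!) := by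
        rw [mul_assoc]
        exact Nat.mul_le_mul_left _ (lemP a N ha)
      calc ∑ p ∈ Finset.HasAntidiagonal.antidiagonal N, p.1 ! * p.2 ! * (N + a) ^ a
          ≤ 3 * (a ^ (a - 1) * (N + a)!) := le_trans h1 h2
        _ ≤ (36 * a ^ (a - 1)) ^ (0 + 1) * (N + (0 + 1) * a)! := by
            rw [pow_one, show N + (0 + 1) * a = N + a by ring]
            calc 3 * (a ^ (a - 1) * (N + a)!) ≤ 36 * (a ^ (a - 1) * (N + a)!) :=
                  Nat.mul_le_mul_right _ (by norm_num)
              _ = 36 * a ^ (a - 1) * (N + a)! := by ring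
  | succ n ih =>
      rw [show 2 * (n + 1) + 2 = 2 * n + 2 + 1 + 1 by ring]
      rw [sum_AT_cons (2 * n + 2 + 1) N]
      rw [Finset.sum_congr rfl fun p (_ : p ∈ Finset.HasAntidiagonal.antidiagonal N) =>
        sum_AT_cons (2 * n + 2) p.2 _]
      -- pointwise transformation of the summand
      have hterm : ∀ p ∈ Finset.HasAntidiagonal.antidiagonal N, ∀ q ∈ Finset.HasAntidiagonal.antidiagonal p.2,
          ∀ g ∈ Finset.Nat.antidiagonalTuple (2 * n + 2) q.2,
          (∏ i, ((Fin.cons p.1 (Fin.cons q.1 g) : Fin (2 * n + 2 + 1 + 1) → ℕ) i).factorial) *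
            ∏ i ∈ Finset.range (n + 1 + 1),
              ((∑ j ∈ Finset.univ.filter (fun j : Fin (2 * n + 2 + 1 + 1) => 2 * i ≤ (j : ℕ)),
                (Fin.cons p.1 (Fin.cons q.1 g) : Fin (2 * n + 2 + 1 + 1) → ℕ) j) +
                  (n + 1 + 1 - i) * a) ^ a
          = (p.1 ! * (q.1 ! * (N + (n + 1 + 1) * a) ^ a)) *
              ((∏ i, (g i).factorial) *
                ∏ i ∈ Finset.range (n + 1),
                  ((∑ j ∈ Finset.univ.filter (fun j : Fin (2 * n + 2) => 2 * i ≤ (j : ℕ)), g j) +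
                      (n + 1 - i) * a) ^ a) := by
        intro p hp q hq g hg
        rw [Finset.HasAntidiagonal.mem_antidiagonal] at hp hq
        rw [Finset.Nat.mem_antidiagonalTuple] at hg
        have hfact : (∏ i, ((Fin.cons p.1 (Fin.cons q.1 g) : Fin (2 * n + 2 + 1 + 1) → ℕ) i).factorial)
            = p.1 ! * (q.1 ! * ∏ i, (g i).factorial) := by
          rw [Fin.prod_univ_succ, Fin.prod_univ_succ]
          simp [Fin.cons_zero, Fin.cons_succ]
        rw [hfact]
        rw [Finset.prod_range_succ']
        have h0 : ((∑ j ∈ Finset.univ.filter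
              (fun j : Fin (2 * n + 2 + 1 + 1) => 2 * 0 ≤ (j : ℕ)),
              (Fin.cons p.1 (Fin.cons q.1 g) : Fin (2 * n + 2 + 1 + 1) → ℕ) j) +
                (n + 1 + 1 - 0) * a) ^ a = (N + (n + 1 + 1) * a) ^ a := by
          have hf : Finset.univ.filter (fun j : Fin (2 * n + 2 + 1 + 1) => 2 * 0 ≤ (j : ℕ))
              = Finset.univ := by simp
          rw [hf, Fin.sum_cons, Fin.sum_cons, hg]
          congr 2
          omega
        rw [h0]
        have hmid : ∀ i ∈ Finset.range (n + 1),
            ((∑ j ∈ Finset.univ.filter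
                (fun j : Fin (2 * n + 2 + 1 + 1) => 2 * (i + 1) ≤ (j : ℕ)),
                (Fin.cons p.1 (Fin.cons q.1 g) : Fin (2 * n + 2 + 1 + 1) → ℕ) j) +
                  (n + 1 + 1 - (i + 1)) * a) ^ a
            = ((∑ j ∈ Finset.univ.filter (fun j : Fin (2 * n + 2) => 2 * i ≤ (j : ℕ)), g j) +
                  (n + 1 - i) * a) ^ a := by
          intro i hi
          have hin : i < n + 1 := Finset.mem_range.mp hi
          have e1 : Finset.univ.filter (fun j : Fin (2 * n + 2 + 1 + 1) => 2 * (i + 1) ≤ (j : ℕ))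
              = Finset.univ.filter
                (fun j : Fin (2 * n + 2 + 1 + 1) => (2 * i + 1) + 1 ≤ (j : ℕ)) := by
            ext j
            simp only [Finset.mem_filter, Finset.mem_univ, true_and]
            omega
          rw [e1, tail_filter_sum, Fin.tail_cons, tail_filter_sum, Fin.tail_cons,
            show n + 1 + 1 - (i + 1) = n + 1 - i by omega]
        rw [Finset.prod_congr rfl hmid]
        ring
      rw [Finset.sum_congr rfl fun p hp => Finset.sum_congr rfl fun q hq =>
        Finset.sum_congr rfl fun g hg => hterm p hp q hq g hg]
      -- apply the induction hypothesis
      have hin : ∀ p ∈ Finset.HasAntidiagonal.antidiagonal N, ∀ q ∈ Finset.HasAntidiagonal.antidiagonal p.2,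
          ∑ g ∈ Finset.Nat.antidiagonalTuple (2 * n + 2) q.2,
            (p.1 ! * (q.1 ! * (N + (n + 1 + 1) * a) ^ a)) *
              ((∏ i, (g i).factorial) *
                ∏ i ∈ Finset.range (n + 1),
                  ((∑ j ∈ Finset.univ.filter (fun j : Fin (2 * n + 2) => 2 * i ≤ (j : ℕ)), g j) +
                      (n + 1 - i) * a) ^ a)
          ≤ (p.1 ! * (q.1 ! * (N + (n + 1 + 1) * a) ^ a)) *
              ((36 * a ^ (a - 1)) ^ (n + 1) * (q.2 + (n + 1) * a)!) := by
        intro p _ q _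
        rw [← Finset.mul_sum]
        exact Nat.mul_le_mul_left _ (ih q.2)
      calc ∑ p ∈ Finset.HasAntidiagonal.antidiagonal N, ∑ q ∈ Finset.HasAntidiagonal.antidiagonal p.2,
            ∑ g ∈ Finset.Nat.antidiagonalTuple (2 * n + 2) q.2,
            (p.1 ! * (q.1 ! * (N + (n + 1 + 1) * a) ^ a)) *
              ((∏ i, (g i).factorial) *
                ∏ i ∈ Finset.range (n + 1),
                  ((∑ j ∈ Finset.univ.filter (fun j : Fin (2 * n + 2) => 2 * i ≤ (j : ℕ)), g j) +
                      (n + 1 - i) * a) ^ a)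
          ≤ ∑ p ∈ Finset.HasAntidiagonal.antidiagonal N, ∑ q ∈ Finset.HasAntidiagonal.antidiagonal p.2,
            (p.1 ! * (q.1 ! * (N + (n + 1 + 1) * a) ^ a)) *
              ((36 * a ^ (a - 1)) ^ (n + 1) * (q.2 + (n + 1) * a)!) :=
            Finset.sum_le_sum fun p hp => Finset.sum_le_sum fun q hq => hin p hp q hq
        _ = ((N + (n + 1 + 1) * a) ^ a * (36 * a ^ (a - 1)) ^ (n + 1)) *
            ∑ p ∈ Finset.HasAntidiagonal.antidiagonal N, ∑ q ∈ Finset.HasAntidiagonal.antidiagonal p.2,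
              p.1 ! * (q.1 ! * (q.2 + (n + 1) * a)!) := by
            rw [Finset.mul_sum]
            refine Finset.sum_congr rfl fun p _ => ?_
            rw [Finset.mul_sum]
            exact Finset.sum_congr rfl fun q _ => by ring
        _ ≤ ((N + (n + 1 + 1) * a) ^ a * (36 * a ^ (a - 1)) ^ (n + 1)) *
            (4 * (N + (n + 1) * a)!) :=
            Nat.mul_le_mul_left _ (lemBB ((n + 1) * a) N (by nlinarith))
        _ ≤ (36 * a ^ (a - 1)) ^ (n + 1 + 1) * (N + (n + 1 + 1) * a)! := by
            have he : N + (n + 1) * a + a = N + (n + 1 + 1) * a := by ring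
            have hlp := lemP a (N + (n + 1) * a) ha
            rw [he] at hlp
            have key : 4 * ((N + (n + 1) * a)! * (N + (n + 1 + 1) * a) ^ a)
                ≤ 36 * (a ^ (a - 1) * (N + (n + 1 + 1) * a)!) :=
              le_trans (Nat.mul_le_mul_left 4 hlp) (Nat.mul_le_mul_right _ (by norm_num))
            calc ((N + (n + 1 + 1) * a) ^ a * (36 * a ^ (a - 1)) ^ (n + 1)) *
                  (4 * (N + (n + 1) * a)!)
                = (36 * a ^ (a - 1)) ^ (n + 1) *
                  (4 * ((N + (n + 1) * a)! * (N + (n + 1 + 1) * a) ^ a)) := by ring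
              _ ≤ (36 * a ^ (a - 1)) ^ (n + 1) *
                  (36 * (a ^ (a - 1) * (N + (n + 1 + 1) * a)!)) :=
                  Nat.mul_le_mul_left _ key
              _ = (36 * a ^ (a - 1)) ^ (n + 1 + 1) * (N + (n + 1 + 1) * a)! := by ring
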